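/- arXiv:1702.00704 — 2 statements merged into one kernel-verified Lean document; each statement's English description precedes it below -/
import Mathlib

section
/- Let Ω ⊆ ℂ be open, let h : Ω → ℂ be holomorphic and nowhere vanishing (so that θ = h(x)dx is a nowhere vanishing holomorphic 1-form on Ω), let n ≥ 1, and let f = (x₁, x₂, …, xₙ, y₁, …, yₙ, z) : 𝔻 → Ω × ℂ^{2n} be holomorphic on the open unit disc 𝔻 ⊂ ℂ. Define g : 𝔻 → ℂ by g(ζ) = z′(ζ) − y₁(ζ)·h(x₁(ζ))·x₁′(ζ) − Σ_{i=2}^{n} yᵢ(ζ)·xᵢ′(ζ) (so that f*α = g(ζ)dζ for the contact form α = dz − y₁θ(x₁) − Σ_{i=2}^{n} yᵢ dxᵢ), and set z̃(ζ) = z(ζ) − ∫₀¹ g(tζ)·ζ dt (the integral of f*α along the segment from 0 to ζ). Then: (1) z̃ is holomorphic on 𝔻; (2) the map f̃ = (x₁, …, xₙ, y₁, …, yₙ, z̃) is α-Legendrian, i.e. z̃′(ζ) = y₁(ζ)·h(x₁(ζ))·x₁′(ζ) + Σ_{i=2}^{n} yᵢ(ζ)·xᵢ′(ζ) for all ζ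 ∈ 𝔻; and (3) sup_{ζ∈𝔻} |z̃(ζ) − z(ζ)| ≤ sup_{ζ∈𝔻} |∫₀¹ g(tζ)·ζ dt|. -/
open scoped Real

open Metric intervalIntegral MeasureTheory

lemma map_mem_ball {w : ℂ} {r : ℝ} (hw : ‖w‖ < r) {t : ℝ} (ht0 : 0 ≤ t) (ht1 : t ≤ 1) :
    (t : ℂ) * w ∈ Metric.ball (0:ℂ) r := by
  rw [mem_ball_zero_iff, norm_mul, Complex.norm_real, Real.norm_eq_abs, abs_of_nonneg ht0]
  calc t * ‖w‖ ≤ 1 * ‖w‖ := by nlinarith [norm_nonneg w]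
  _ = ‖w‖ := one_mul _
  _ < r := hw

lemma primitive_hasDerivAt {g : ℂ → ℂ} (hgd : DifferentiableOn ℂ g (Metric.ball 0 1))
    {ζ : ℂ} (hζ : ζ ∈ Metric.ball (0:ℂ) 1) :
    HasDerivAt (fun w => ∫ t in (0:ℝ)..1, g ((t:ℂ) * w) * w) (g ζ) ζ := by
  rw [mem_ball_zero_iff] at hζ
  have hgA : AnalyticOnNhd ℂ g (Metric.ball 0 1) := hgd.analyticOnNhd isOpen_ball
  have hg'c : ContinuousOn (deriv g) (Metric.ball 0 1) := hgA.deriv.continuousOn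
  have hgc : ContinuousOn g (Metric.ball 0 1) := hgd.continuousOn
  set r : ℝ := (1 + ‖ζ‖) / 2 with hr
  have hr1 : r < 1 := by rw [hr]; linarith
  have hζr : ‖ζ‖ < r := by rw [hr]; linarith [norm_nonneg ζ]
  have hrpos : 0 < r := lt_of_le_of_lt (norm_nonneg ζ) hζr
  set ε : ℝ := r - ‖ζ‖ with hε
  have hεpos : 0 < ε := by rw [hε]; linarith
  have hball : ∀ w ∈ Metric.ball ζ ε, ‖w‖ < r := by
    intro w hw
    have := mem_ball_iff_norm.mp hw
    calc ‖w‖ = ‖(w - ζ) + ζ‖ := by ring_nf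
    _ ≤ ‖w - ζ‖ + ‖ζ‖ := norm_add_le _ _
    _ < ε + ‖ζ‖ := by linarith
    _ = r := by rw [hε]; ring
  have hKsub : Metric.closedBall (0:ℂ) r ⊆ Metric.ball 0 1 := closedBall_subset_ball hr1
  obtain ⟨Cg, hCg⟩ := (isCompact_closedBall (0:ℂ) r).exists_bound_of_continuousOn
    (hgc.mono hKsub)
  obtain ⟨Cg', hCg'⟩ := (isCompact_closedBall (0:ℂ) r).exists_bound_of_continuousOn
    (hg'c.mono hKsub)
  -- membership helpers
  have hmem : ∀ w : ℂ, ‖w‖ < r → ∀ t ∈ Set.Icc (0:ℝ) 1, (t:ℂ) * w ∈ Metric.ball (0:ℂ) 1 :=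
    fun w hw t ht => map_mem_ball (lt_trans hw hr1) ht.1 ht.2
  have hmemK : ∀ w : ℂ, ‖w‖ < r → ∀ t ∈ Set.Icc (0:ℝ) 1,
      (t:ℂ) * w ∈ Metric.closedBall (0:ℂ) r := by
    intro w hw t ht
    exact ball_subset_closedBall (map_mem_ball hw ht.1 ht.2)
  set F' : ℂ → ℝ → ℂ := fun w t => deriv g ((t:ℂ) * w) * (t:ℂ) * w + g ((t:ℂ) * w) with hF'
  have hIoc : Set.uIoc (0:ℝ) 1 = Set.Ioc (0:ℝ) 1 := Set.uIoc_of_le zero_le_one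
  have hcont : ∀ w : ℂ, ‖w‖ < r → ContinuousOn (fun t : ℝ => g ((t:ℂ) * w) * w)
      (Set.Icc (0:ℝ) 1) := by
    intro w hw
    exact ((hgc.comp ((Complex.continuous_ofReal.mul continuous_const).continuousOn)
      (fun t ht => hmem w hw t ht)).mul continuousOn_const)
  have hcont' : ∀ w : ℂ, ‖w‖ < r → ContinuousOn (fun t : ℝ => F' w t)
      (Set.Icc (0:ℝ) 1) := by
    intro w hw
    have h1 : ContinuousOn (fun t : ℝ => ((t:ℂ) * w)) (Set.Icc (0:ℝ) 1) :=
      (Complex.continuous_ofReal.mul continuous_const).continuousOn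
    exact (((hg'c.comp h1 (fun t ht => hmem w hw t ht)).mul
      Complex.continuous_ofReal.continuousOn).mul continuousOn_const).add
      (hgc.comp h1 (fun t ht => hmem w hw t ht))
  have key := intervalIntegral.hasDerivAt_integral_of_dominated_loc_of_deriv_le
      (F := fun w t => g ((t:ℂ) * w) * w) (F' := F') (x₀ := ζ)
      (bound := fun _ => Cg' * r + Cg) (μ := volume) (a := 0) (b := 1) (s := Metric.ball ζ ε) (Metric.ball_mem_nhds ζ hεpos)
      ?_ ?_ ?_ ?_ ?_ ?_
  · -- convert integral of F' to g ζ
    have heq : (∫ t in (0:ℝ)..1, F' ζ t) = g ζ := by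
      have hderiv : ∀ t ∈ Set.uIcc (0:ℝ) 1,
          HasDerivAt (fun s : ℝ => (s:ℂ) * g ((s:ℂ) * ζ)) (F' ζ t) t := by
        intro t ht
        rw [Set.uIcc_of_le zero_le_one] at ht
        have htζ : (t:ℂ) * ζ ∈ Metric.ball (0:ℂ) 1 := hmem ζ hζr t ht
        have h1 : HasDerivAt (fun s : ℝ => (s:ℂ)) 1 t := Complex.ofRealCLM.hasDerivAt
        have h2 : HasDerivAt (fun s : ℝ => (s:ℂ) * ζ) ζ t := by
          simpa using h1.mul_const ζ
        have hga : HasDerivAt g (deriv g ((t:ℂ) * ζ)) ((t:ℂ) * ζ) :=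
          ((hgd.differentiableAt (isOpen_ball.mem_nhds htζ)).hasDerivAt)
        have h3 : HasDerivAt (fun s : ℝ => g ((s:ℂ) * ζ)) (deriv g ((t:ℂ) * ζ) * ζ) t := by
          convert (hga.hasFDerivAt.restrictScalars ℝ).comp_hasDerivAt t h2 using 1
          · rfl
          · rfl
          · simp [mul_comm]
        have := h1.mul h3
        convert this using 1
        · rfl
        · rfl
        rw [hF']; ring
      have hint : IntervalIntegrable (F' ζ) volume 0 1 :=
        (hcont' ζ hζr).intervalIntegrable_of_Icc zero_le_one
      have := intervalIntegral.integral_eq_sub_of_hasDerivAt hderiv hint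
      rw [this]; simp
    rw [heq] at key
    exact key.2
  · -- hF_meas
    filter_upwards [Metric.ball_mem_nhds ζ hεpos] with w hw
    exact ((hcont w (hball w hw)).mono Set.Ioc_subset_Icc_self).aestronglyMeasurable
      measurableSet_Ioc |>.mono_set (by rw [hIoc])
  · -- hF_int at ζ
    exact (hcont ζ hζr).intervalIntegrable_of_Icc zero_le_one
  · -- hF'_meas
    exact ((hcont' ζ hζr).mono Set.Ioc_subset_Icc_self).aestronglyMeasurable
      measurableSet_Ioc |>.mono_set (by rw [hIoc])
  · -- h_bound
    refine Filter.Eventually.of_forall (fun t ht w hw => ?_)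
    rw [hIoc] at ht
    have htI : t ∈ Set.Icc (0:ℝ) 1 := ⟨le_of_lt ht.1, ht.2⟩
    have hwr : ‖w‖ < r := hball w hw
    have h1 : ‖deriv g ((t:ℂ) * w)‖ ≤ Cg' := hCg' _ (hmemK w hwr t htI)
    have h2 : ‖g ((t:ℂ) * w)‖ ≤ Cg := hCg _ (hmemK w hwr t htI)
    have hts : ‖(t:ℂ)‖ ≤ 1 := by
      rw [Complex.norm_real, Real.norm_eq_abs, abs_of_nonneg htI.1]; exact htI.2
    have hCg'0 : (0:ℝ) ≤ Cg' := le_trans (norm_nonneg _) h1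
    have h3 : ‖deriv g ((t:ℂ) * w) * (t:ℂ) * w‖ ≤ Cg' * r := by
      rw [norm_mul, norm_mul]
      have := mul_le_mul (mul_le_mul h1 hts (norm_nonneg _) hCg'0) hwr.le (norm_nonneg _)
        (mul_nonneg hCg'0 zero_le_one)
      linarith
    calc ‖F' w t‖ ≤ ‖deriv g ((t:ℂ) * w) * (t:ℂ) * w‖ + ‖g ((t:ℂ) * w)‖ := norm_add_le _ _
    _ ≤ Cg' * r + Cg := add_le_add h3 h2
  · exact intervalIntegrable_const
  · -- h_diff
    refine Filter.Eventually.of_forall (fun t ht w hw => ?_)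
    rw [hIoc] at ht
    have htI : t ∈ Set.Icc (0:ℝ) 1 := ⟨le_of_lt ht.1, ht.2⟩
    have htw : (t:ℂ) * w ∈ Metric.ball (0:ℂ) 1 := hmem w (hball w hw) t htI
    have hga : HasDerivAt g (deriv g ((t:ℂ) * w)) ((t:ℂ) * w) :=
      (hgd.differentiableAt (isOpen_ball.mem_nhds htw)).hasDerivAt
    have h2 : HasDerivAt (fun u : ℂ => (t:ℂ) * u) (t:ℂ) w := by
      simpa using (hasDerivAt_id w).const_mul (t:ℂ)
    have h3 : HasDerivAt (fun u : ℂ => g ((t:ℂ) * u)) (deriv g ((t:ℂ) * w) * (t:ℂ)) w :=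
      hga.comp w h2
    have h4 := h3.mul (hasDerivAt_id w)
    convert h4 using 1
    · rfl
    · rfl
    simp only [hF', id]; ring

/-- **Lemma 3.1 (correction of the `z`-component to a Legendrian disc).**
On `Ω × ℂ^{2n}` (with `n = m + 1 ≥ 1`) with contact form
`α = dz − y₁ h(x₁) dx₁ − Σ_{i=2}^n yᵢ dxᵢ`
(`θ = h(x) dx` a nowhere vanishing holomorphic 1-form on the open set `Ω ⊆ ℂ`),
given a holomorphic map `f = (x₁,…,xₙ,y₁,…,yₙ,z)` on the unit disc `𝔻`, the function
`z̃(ζ) = z(ζ) − ∫₀^ζ f*α` (integral along the segment from `0` to `ζ`) is holomorphic,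
the map `f̃ = (x,y,z̃)` is α-Legendrian, and `sup_𝔻 |z̃ − z| ≤ sup_𝔻 |∫₀^ζ f*α|`. -/
theorem stmt_1
    (Ω : Set ℂ) (hΩ : IsOpen Ω) (h : ℂ → ℂ)
    (hh : DifferentiableOn ℂ h Ω) (hh0 : ∀ w ∈ Ω, h w ≠ 0)
    (m : ℕ)  -- the number of coordinate pairs is `n = m + 1 ≥ 1`
    (x y : Fin (m + 1) → ℂ → ℂ) (z : ℂ → ℂ)
    (hx : ∀ i, ∀ ζ ∈ Metric.ball (0:ℂ) 1, DifferentiableAt ℂ (x i) ζ)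
    (hy : ∀ i, ∀ ζ ∈ Metric.ball (0:ℂ) 1, DifferentiableAt ℂ (y i) ζ)
    (hz : ∀ ζ ∈ Metric.ball (0:ℂ) 1, DifferentiableAt ℂ z ζ)
    (hx1 : ∀ ζ ∈ Metric.ball (0:ℂ) 1, x 0 ζ ∈ Ω)
    (g : ℂ → ℂ)
    (hg : ∀ ζ ∈ Metric.ball (0:ℂ) 1,
      g ζ = deriv z ζ - y 0 ζ * h (x 0 ζ) * deriv (x 0) ζ
        - ∑ i ∈ Finset.univ.erase (0 : Fin (m + 1)), y i ζ * deriv (x i) ζ)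
    (ztil : ℂ → ℂ)
    (hztil : ∀ ζ, ztil ζ = z ζ - ∫ t in (0:ℝ)..1, g ((t : ℂ) * ζ) * ζ) :
    -- (1) `z̃` is holomorphic on `𝔻`
    (∀ ζ ∈ Metric.ball (0:ℂ) 1, DifferentiableAt ℂ ztil ζ) ∧
    -- (2) `f̃ = (x, y, z̃)` is α-Legendrian
    (∀ ζ ∈ Metric.ball (0:ℂ) 1,
      deriv ztil ζ = y 0 ζ * h (x 0 ζ) * deriv (x 0) ζ
        + ∑ i ∈ Finset.univ.erase (0 : Fin (m + 1)), y i ζ * deriv (x i) ζ) ∧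
    -- (3) `sup_{𝔻} |z̃ − z| ≤ sup_{𝔻} |∫₀^ζ f*α|`
    (∀ C : ℝ,
      (∀ ζ ∈ Metric.ball (0:ℂ) 1, ‖∫ t in (0:ℝ)..1, g ((t : ℂ) * ζ) * ζ‖ ≤ C) →
      ∀ ζ ∈ Metric.ball (0:ℂ) 1, ‖ztil ζ - z ζ‖ ≤ C) := by
  have hzD : DifferentiableOn ℂ z (Metric.ball (0:ℂ) 1) :=
    fun ζ hζ => (hz ζ hζ).differentiableWithinAt
  have hzA : AnalyticOnNhd ℂ z (Metric.ball (0:ℂ) 1) := hzD.analyticOnNhd isOpen_ball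
  have hxD : ∀ i, DifferentiableOn ℂ (x i) (Metric.ball (0:ℂ) 1) :=
    fun i ζ hζ => (hx i ζ hζ).differentiableWithinAt
  have hxA : ∀ i, AnalyticOnNhd ℂ (x i) (Metric.ball (0:ℂ) 1) := fun i =>
    (hxD i).analyticOnNhd isOpen_ball
  have hgD : DifferentiableOn ℂ g (Metric.ball (0:ℂ) 1) := by
    intro ζ hζ
    have hexpr : DifferentiableAt ℂ (fun w => deriv z w - y 0 w * h (x 0 w) * deriv (x 0) w
        - ∑ i ∈ Finset.univ.erase (0 : Fin (m + 1)), y i w * deriv (x i) w) ζ := by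
      refine DifferentiableAt.sub (DifferentiableAt.sub ?_ ?_) ?_
      · exact (hzA.deriv ζ hζ).differentiableAt
      · exact ((hy 0 ζ hζ).mul
          ((hh.differentiableAt (hΩ.mem_nhds (hx1 ζ hζ))).comp ζ (hx 0 ζ hζ))).mul
          (((hxA 0).deriv ζ hζ).differentiableAt)
      · exact DifferentiableAt.fun_sum (fun i _ =>
          (hy i ζ hζ).mul (((hxA i).deriv ζ hζ).differentiableAt))
    have heq : g =ᶠ[nhds ζ] _ :=
      Filter.eventually_of_mem (isOpen_ball.mem_nhds hζ) (fun w hw => hg w hw)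
    exact (hexpr.congr_of_eventuallyEq heq).differentiableWithinAt
  have key : ∀ ζ ∈ Metric.ball (0:ℂ) 1, HasDerivAt ztil (deriv z ζ - g ζ) ζ := by
    intro ζ hζ
    have hztileq : ztil = fun w => z w - ∫ t in (0:ℝ)..1, g ((t : ℂ) * w) * w := funext hztil
    rw [hztileq]
    exact ((hz ζ hζ).hasDerivAt).sub (primitive_hasDerivAt hgD hζ)
  refine ⟨fun ζ hζ => (key ζ hζ).differentiableAt, fun ζ hζ => ?_, fun C hC ζ hζ => ?_⟩
  · rw [(key ζ hζ).deriv, hg ζ hζ]; ring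
  · have : ztil ζ - z ζ = -(∫ t in (0:ℝ)..1, g ((t : ℂ) * ζ) * ζ) := by rw [hztil]; ring
    rw [this, norm_neg]; exact hC ζ hζ
end

section
/- Let V be a finite-dimensional complex vector space with dim_ℂ V = 2n and let ω be a nondegenerate alternating ℂ-bilinear form on V. If U is an isotropic real subspace of V with dim_ℝ U = 2n (i.e. U is Lagrangian), then U = Span_ℂ(U) = U^⊥; in particular, U is a complex linear subspace of V (closed under multiplication by i). -/
/-- The ω-orthogonal complement `U^⊥ = {v : V | ∀ u ∈ U, ω u v = 0}` of a set `U ⊆ V`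
with respect to a ℂ-bilinear form `ω`, as a complex linear subspace of `V`. -/
def omegaPerp {V : Type*} [AddCommGroup V] [Module ℂ V]
    (ω : V →ₗ[ℂ] V →ₗ[ℂ] ℂ) (U : Set V) : Submodule ℂ V where
  carrier := {v : V | ∀ u ∈ U, ω u v = 0}
  add_mem' := by
    intro a b ha hb u hu
    simp [map_add, ha u hu, hb u hu]
  zero_mem' := by
    intro u hu
    simp
  smul_mem' := by
    intro c a ha u hu
    simp [ha u hu]

/-- **Lagrangian real subspaces are complex.**
If `V` is a complex vector space with `dim_ℂ V = 2n`, `ω` is a nondegenerate alternating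
ℂ-bilinear form on `V`, and `U` is an isotropic real subspace with `dim_ℝ U = 2n`
(i.e. `U` is Lagrangian), then `U = Span_ℂ(U) = U^⊥`; in particular `U` is a complex
subspace of `V`, i.e. it is closed under multiplication by `i`. -/
theorem stmt_5
    {V : Type*} [AddCommGroup V] [Module ℝ V] [Module ℂ V] [IsScalarTower ℝ ℂ V]
    [FiniteDimensional ℂ V]
    (n : ℕ) (hdim : Module.finrank ℂ V = 2 * n)
    (ω : V →ₗ[ℂ] V →ₗ[ℂ] ℂ) (halt : ∀ v : V, ω v v = 0)
    (hnd : ∀ v : V, (∀ w : V, ω v w = 0) → v = 0)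
    (U : Submodule ℝ V)
    (hiso : ∀ u ∈ U, ∀ u' ∈ U, ω u u' = 0)
    (hLag : Module.finrank ℝ U = 2 * n) :
    (U : Set V) = (Submodule.span ℂ (U : Set V) : Set V) ∧
    (U : Set V) = (omegaPerp ω (U : Set V) : Set V) ∧
    (∀ v ∈ U, (Complex.I : ℂ) • v ∈ U) := by
  have : FiniteDimensional ℝ V := FiniteDimensional.trans ℝ ℂ V
  set B : LinearMap.BilinForm ℂ V := ω with hB
  have hrefl : B.IsRefl := (show B.IsAlt from halt).isRefl
  set W := Submodule.span ℂ (U : Set V) with hW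
  have hUperp : (U : Set V) ⊆ (B.orthogonal W : Set V) := by
    intro v hv
    rw [SetLike.mem_coe, LinearMap.BilinForm.mem_orthogonal_iff]
    intro u hu
    have : W ≤ LinearMap.ker (B.flip v) := by
      rw [hW, Submodule.span_le]
      intro x hx
      simpa using hiso x hx v hv
    exact this hu
  have hWperp : W ≤ B.orthogonal W := by
    rw [hW, Submodule.span_le]; exact hUperp
  have hfin : Module.finrank ℂ (B.orthogonal W) = Module.finrank ℂ V - Module.finrank ℂ W :=
    LinearMap.BilinForm.finrank_orthogonal (LinearMap.IsRefl.nondegenerate_iff_separatingLeft hrefl |>.mpr hnd) W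
  have h1 : Module.finrank ℂ W ≤ Module.finrank ℂ (B.orthogonal W) :=
    Submodule.finrank_mono hWperp
  have hUW : U ≤ W.restrictScalars ℝ := fun x hx => Submodule.subset_span hx
  have h2 : Module.finrank ℝ (W.restrictScalars ℝ) = 2 * Module.finrank ℂ W := by
    have := Module.finrank_mul_finrank ℝ ℂ W
    simp [Complex.finrank_real_complex] at this
    exact this.symm
  have h3 : 2 * n ≤ Module.finrank ℝ (W.restrictScalars ℝ) := by
    rw [← hLag]; exact Submodule.finrank_mono hUW
  have hle : Module.finrank ℂ W ≤ Module.finrank ℂ V := Submodule.finrank_le W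
  have hn : Module.finrank ℂ W = n := by omega
  have hUeq : U = W.restrictScalars ℝ := by
    apply Submodule.eq_of_le_of_finrank_le hUW
    omega
  have hset : (U : Set V) = (W : Set V) := by rw [hUeq]; rfl
  have horth : W = B.orthogonal W := by
    apply Submodule.eq_of_le_of_finrank_le hWperp
    omega
  refine ⟨hset, ?_, ?_⟩
  · ext v
    constructor
    · intro hv
      show ∀ u ∈ (U : Set V), ω u v = 0
      intro u hu
      exact hiso u hu v hv
    · intro hv
      have hv' : ∀ u ∈ (U : Set V), ω u v = 0 := hv
      have hvW : v ∈ B.orthogonal W := by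
        rw [LinearMap.BilinForm.mem_orthogonal_iff]
        intro u hu
        have : W ≤ LinearMap.ker (B.flip v) := by
          rw [hW, Submodule.span_le]
          intro x hx
          simpa using hv' x hx
        exact this hu
      rw [← horth] at hvW
      show v ∈ U
      rw [hUeq]
      exact hvW
  · intro v hv
    have hvW : (Complex.I : ℂ) • v ∈ W := W.smul_mem _ (Submodule.subset_span hv)
    rw [hUeq]; exact hvW
end
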